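/- Let (Ω, F, (F_t)_{t∈[0,T]}, P) be a filtered probability space, T > 0 and C ≥ 0. For each j ∈ ℕ let (μ_j(t))_{t∈[0,T]} be an (F_t)-adapted process taking values in the Borel probability measures on ℝ^d, whose sample paths t ↦ μ_j(t) are continuous with respect to d_BL. Assume that for each j the real-valued process t ↦ e^{Ct}(∫|x|² dμ_j(t)(x) + 1) is an (F_t)-submartingale, and that sup_{j∈ℕ} E ∫|x|² dμ_j(T)(x) < ∞. Then for every δ > 0 there exists a set K_δ of Borel probability measures on ℝ^d, compact in the topology of weak convergence, such that for every j, P( μ_j(t) ∈ K_δ^δ for all t ∈ [0,T] ) ≥ 1 − δ, where K_δ^δ = { μ : there exists η ∈ K_δ with d_BL(μ, η) < δ }. -/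

import Mathlib

set_option maxHeartbeats 2000000


open MeasureTheory
open scoped ENNReal NNReal

/-- Bounded Lipschitz distance between Borel measures on `ℝ^d`. -/
noncomputable def dBL {d : ℕ} (μ η : Measure (EuclideanSpace ℝ (Fin d))) : ℝ :=
  sSup {r : ℝ | ∃ f : EuclideanSpace ℝ (Fin d) → ℝ,
    (∀ x, |f x| ≤ 1) ∧ LipschitzWith 1 f ∧ r = |(∫ x, f x ∂μ) - ∫ x, f x ∂η|}

/-! ### Auxiliary lemmas about `dBL` -/

lemma abs_integral_le_one' {d : ℕ} {μ : Measure (EuclideanSpace ℝ (Fin d))}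
    [IsProbabilityMeasure μ] {f : EuclideanSpace ℝ (Fin d) → ℝ} (hf : ∀ x, |f x| ≤ 1) :
    |∫ x, f x ∂μ| ≤ 1 := by
  by_cases h : Integrable f μ
  · calc |∫ x, f x ∂μ| ≤ ∫ x, |f x| ∂μ := norm_integral_le_integral_norm f
      _ ≤ ∫ _x, (1:ℝ) ∂μ := integral_mono h.abs (integrable_const 1) hf
      _ = 1 := by simp
  · rw [integral_undef h]; norm_num

lemma dBL_le {d : ℕ} {μ η : Measure (EuclideanSpace ℝ (Fin d))} {c : ℝ} (hc : 0 ≤ c)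
    (h : ∀ f : EuclideanSpace ℝ (Fin d) → ℝ, (∀ x, |f x| ≤ 1) → LipschitzWith 1 f →
      |(∫ x, f x ∂μ) - ∫ x, f x ∂η| ≤ c) : dBL μ η ≤ c :=
  Real.sSup_le (by rintro r ⟨f, h1, h2, rfl⟩; exact h f h1 h2) hc

lemma abs_sub_integral_le_dBL {d : ℕ} {μ η : Measure (EuclideanSpace ℝ (Fin d))}
    [IsProbabilityMeasure μ] [IsProbabilityMeasure η] {f : EuclideanSpace ℝ (Fin d) → ℝ}
    (h1 : ∀ x, |f x| ≤ 1) (h2 : LipschitzWith 1 f) :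
    |(∫ x, f x ∂μ) - ∫ x, f x ∂η| ≤ dBL μ η := by
  have hmem : |(∫ x, f x ∂μ) - ∫ x, f x ∂η| ∈ {r : ℝ | ∃ f : EuclideanSpace ℝ (Fin d) → ℝ,
      (∀ x, |f x| ≤ 1) ∧ LipschitzWith 1 f ∧ r = |(∫ x, f x ∂μ) - ∫ x, f x ∂η|} :=
    ⟨f, h1, h2, rfl⟩
  refine le_csSup ⟨2, ?_⟩ hmem
  rintro r ⟨g, hg1, hg2, rfl⟩
  calc |(∫ x, g x ∂μ) - ∫ x, g x ∂η| ≤ |∫ x, g x ∂μ| + |∫ x, g x ∂η| := abs_sub _ _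
    _ ≤ 1 + 1 := add_le_add (abs_integral_le_one' hg1) (abs_integral_le_one' hg1)
    _ = 2 := by norm_num

/-! ### A measurable "nearest point in a finite list" selection -/

noncomputable def pickFn {d : ℕ} (ε : ℝ) (g₀ : EuclideanSpace ℝ (Fin d)) :
    List (EuclideanSpace ℝ (Fin d)) → EuclideanSpace ℝ (Fin d) → EuclideanSpace ℝ (Fin d)
  | [], _ => g₀
  | g :: l, x => if dist x g < ε then g else pickFn ε g₀ l x

lemma pickFn_mem {d : ℕ} (ε : ℝ) (g₀ : EuclideanSpace ℝ (Fin d))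
    (l : List (EuclideanSpace ℝ (Fin d))) (x : EuclideanSpace ℝ (Fin d)) :
    pickFn ε g₀ l x ∈ g₀ :: l := by
  induction l with
  | nil => simp [pickFn]
  | cons g l ih =>
    rw [pickFn]
    split
    · simp
    · rcases List.mem_cons.mp ih with h | h
      · simp [h]
      · simp [List.mem_cons.mpr (Or.inr (List.mem_cons.mpr (Or.inr h)))]

lemma pickFn_dist {d : ℕ} (ε : ℝ) (g₀ : EuclideanSpace ℝ (Fin d))
    (l : List (EuclideanSpace ℝ (Fin d))) (x : EuclideanSpace ℝ (Fin d))
    (h : ∃ g ∈ l, dist x g < ε) : dist x (pickFn ε g₀ l x) < ε := by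
  induction l with
  | nil => simp at h
  | cons g l ih =>
    rw [pickFn]
    split
    · assumption
    · rcases h with ⟨g', hg', hd⟩
      rcases List.mem_cons.mp hg' with rfl | h'
      · exact absurd hd (by assumption)
      · exact ih ⟨g', h', hd⟩

lemma pickFn_measurable {d : ℕ} (ε : ℝ) (g₀ : EuclideanSpace ℝ (Fin d))
    (l : List (EuclideanSpace ℝ (Fin d))) : Measurable (pickFn ε g₀ l) := by
  classical
  induction l with
  | nil => exact measurable_const
  | cons g l ih =>
    have : pickFn ε g₀ (g :: l) = (Metric.ball g ε).piecewise (fun _ => g) (pickFn ε g₀ l) := by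
      funext x
      rw [pickFn]
      by_cases hx : dist x g < ε
      · rw [if_pos hx, Set.piecewise_eq_of_mem _ _ _ (Metric.mem_ball.mpr hx)]
      · rw [if_neg hx, Set.piecewise_eq_of_notMem _ _ _ (fun hc => hx (Metric.mem_ball.mp hc))]
    rw [this]
    exact Measurable.piecewise Metric.isOpen_ball.measurableSet measurable_const ih

/-! ### Finite convex combinations of Dirac measures -/

noncomputable def diracComb {d : ℕ} (V : Finset (EuclideanSpace ℝ (Fin d)))
    (w : {w : (↥V) → ℝ≥0 // ∑ i, w i = 1}) : ProbabilityMeasure (EuclideanSpace ℝ (Fin d)) :=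
  ⟨∑ i : ↥V, ((w.1 i : ℝ≥0∞)) • Measure.dirac (i : EuclideanSpace ℝ (Fin d)), by
    constructor
    rw [Measure.finset_sum_apply]
    simp only [Measure.smul_apply, measure_univ, smul_eq_mul, mul_one]
    rw [← ENNReal.coe_finset_sum, w.2, ENNReal.coe_one]⟩

lemma integrable_dirac' {d : ℕ} {f : EuclideanSpace ℝ (Fin d) → ℝ}
    (a : EuclideanSpace ℝ (Fin d)) : Integrable f (Measure.dirac a) := by
  refine (integrable_const (f a)).congr ?_
  rw [Filter.eventuallyEq_comm]
  rw [Filter.EventuallyEq, MeasureTheory.ae_dirac_eq]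
  exact Filter.eventually_pure.mpr rfl

lemma integral_diracComb {d : ℕ} (V : Finset (EuclideanSpace ℝ (Fin d)))
    (w : {w : (↥V) → ℝ≥0 // ∑ i, w i = 1}) (f : EuclideanSpace ℝ (Fin d) → ℝ) :
    ∫ x, f x ∂(diracComb V w).toMeasure = ∑ i : ↥V, (w.1 i : ℝ) * f i := by
  have h : (diracComb V w).toMeasure
      = ∑ i : ↥V, ((w.1 i : ℝ≥0∞)) • Measure.dirac (i : EuclideanSpace ℝ (Fin d)) := rfl
  rw [h, integral_finset_sum_measure]
  · refine Finset.sum_congr rfl fun i _ => ?_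
    rw [integral_smul_measure, integral_dirac]
    simp [smul_eq_mul]
  · exact fun i _ => (integrable_dirac' _).smul_measure ENNReal.coe_ne_top

lemma continuous_diracComb {d : ℕ} (V : Finset (EuclideanSpace ℝ (Fin d))) :
    Continuous (diracComb V) := by
  rw [continuous_iff_continuousAt]
  intro w₀
  rw [ContinuousAt, ProbabilityMeasure.tendsto_iff_forall_integral_tendsto]
  intro f
  have hrw : ∀ w : {w : (↥V) → ℝ≥0 // ∑ i, w i = 1},
      ∫ x, f x ∂(diracComb V w).toMeasure = ∑ i : ↥V, (w.1 i : ℝ) * f i :=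
    fun w => integral_diracComb V w f
  simp only [hrw]
  have hc : Continuous fun w : {w : (↥V) → ℝ≥0 // ∑ i, w i = 1} => ∑ i : ↥V, (w.1 i : ℝ) * f i := by
    refine continuous_finset_sum _ fun i _ => Continuous.mul ?_ continuous_const
    exact NNReal.continuous_coe.comp ((continuous_apply i).comp continuous_subtype_val)
  exact hc.tendsto w₀

lemma compactSpace_simplex {d : ℕ} (V : Finset (EuclideanSpace ℝ (Fin d))) :
    CompactSpace {w : (↥V) → ℝ≥0 // ∑ i, w i = 1} := by
  have hcpt : IsCompact {w : (↥V) → ℝ≥0 | ∑ i, w i = 1} := by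
    refine IsCompact.of_isClosed_subset
      (isCompact_univ_pi fun _ => isCompact_Icc (a := (0:ℝ≥0)) (b := 1)) ?_ ?_
    · exact isClosed_eq (continuous_finset_sum _ fun i _ => continuous_apply i) continuous_const
    · intro w hw
      simp only [Set.mem_setOf_eq] at hw
      intro i _
      exact ⟨zero_le, hw ▸ Finset.single_le_sum (f := fun i => w i)
        (fun _ _ => zero_le) (Finset.mem_univ i)⟩
  exact isCompact_iff_compactSpace.mp hcpt

/-! ### Clamping and truncated squared norm -/

lemma clamp_abs (T a t : ℝ) (ht0 : 0 ≤ t) (htT : t ≤ T) :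
    |min T (max 0 a) - t| ≤ |a - t| := by
  rcases le_total a 0 with h0 | h0
  · rw [max_eq_left h0, min_eq_right (le_trans ht0 htT), zero_sub, abs_neg, abs_of_nonneg ht0,
      abs_of_nonpos (by linarith : a - t ≤ 0)]
    linarith
  · rcases le_total a T with hT | hT
    · rw [max_eq_right h0, min_eq_right hT]
    · rw [max_eq_right h0, min_eq_left hT, abs_of_nonneg (by linarith : (0:ℝ) ≤ T - t),
        abs_of_nonneg (by linarith : (0:ℝ) ≤ a - t)]
      linarith

noncomputable def sqCap {d : ℕ} (b : ℝ) (x : EuclideanSpace ℝ (Fin d)) : ℝ := (min ‖x‖ b) ^ 2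

lemma sqCap_nonneg {d : ℕ} (b : ℝ) (x : EuclideanSpace ℝ (Fin d)) : 0 ≤ sqCap b x := sq_nonneg _

lemma sqCap_le_sq {d : ℕ} {b : ℝ} (hb : 0 ≤ b) (x : EuclideanSpace ℝ (Fin d)) :
    sqCap b x ≤ ‖x‖ ^ 2 := by
  have h1 : 0 ≤ min ‖x‖ b := le_min (norm_nonneg _) hb
  exact pow_le_pow_left₀ h1 (min_le_left _ _) 2

lemma sqCap_le {d : ℕ} {b : ℝ} (hb : 0 ≤ b) (x : EuclideanSpace ℝ (Fin d)) :
    sqCap b x ≤ b ^ 2 := by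
  have h1 : 0 ≤ min ‖x‖ b := le_min (norm_nonneg _) hb
  exact pow_le_pow_left₀ h1 (min_le_right _ _) 2

lemma sqCap_abs_sub {d : ℕ} {b : ℝ} (hb : 0 ≤ b) (x y : EuclideanSpace ℝ (Fin d)) :
    |sqCap b x - sqCap b y| ≤ 2 * b * ‖x - y‖ := by
  have hminlip : |min ‖x‖ b - min ‖y‖ b| ≤ ‖x - y‖ := by
    have h := abs_norm_sub_norm_le x y
    rcases le_total ‖x‖ b with h1 | h1 <;> rcases le_total ‖y‖ b with h2 | h2
    · rw [min_eq_left h1, min_eq_left h2]; exact h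
    · rw [min_eq_left h1, min_eq_right h2]
      rw [abs_le] at h ⊢; constructor <;> linarith
    · rw [min_eq_right h1, min_eq_left h2]
      rw [abs_le] at h ⊢; constructor <;> linarith
    · rw [min_eq_right h1, min_eq_right h2, sub_self, abs_zero]; exact norm_nonneg _
  have h1 : 0 ≤ min ‖x‖ b := le_min (norm_nonneg _) hb
  have h2 : 0 ≤ min ‖y‖ b := le_min (norm_nonneg _) hb
  have h3 : min ‖x‖ b ≤ b := min_le_right _ _
  have h4 : min ‖y‖ b ≤ b := min_le_right _ _
  have hfac : sqCap b x - sqCap b y = (min ‖x‖ b - min ‖y‖ b) * (min ‖x‖ b + min ‖y‖ b) := by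
    rw [sqCap, sqCap]; ring
  rw [hfac, abs_mul]
  have habs2 : |min ‖x‖ b + min ‖y‖ b| ≤ 2 * b := by
    rw [abs_of_nonneg (by linarith)]; linarith
  calc |min ‖x‖ b - min ‖y‖ b| * |min ‖x‖ b + min ‖y‖ b| ≤ ‖x - y‖ * (2 * b) :=
        mul_le_mul hminlip habs2 (abs_nonneg _) (norm_nonneg _)
    _ = 2 * b * ‖x - y‖ := by ring

lemma sqCap_continuous {d : ℕ} (b : ℝ) : Continuous (sqCap (d := d) b) :=
  ((continuous_norm.min continuous_const).pow 2)

lemma sqCap_tendsto {d : ℕ} (x : EuclideanSpace ℝ (Fin d)) :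
    Filter.Tendsto (fun n : ℕ => sqCap ((n : ℝ) + 1) x) Filter.atTop (nhds (‖x‖ ^ 2)) := by
  have h : ∀ᶠ n : ℕ in Filter.atTop, sqCap ((n : ℝ) + 1) x = ‖x‖ ^ 2 := by
    filter_upwards [Filter.eventually_ge_atTop (⌈‖x‖⌉₊)] with n hn
    rw [sqCap, min_eq_left]
    calc ‖x‖ ≤ (⌈‖x‖⌉₊ : ℝ) := Nat.le_ceil _
      _ ≤ (n : ℝ) := by exact_mod_cast hn
      _ ≤ (n : ℝ) + 1 := by linarith
  exact Filter.Tendsto.congr' (h.mono fun n h => h.symm) tendsto_const_nhds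

lemma sqCap_mono {d : ℕ} (x : EuclideanSpace ℝ (Fin d)) :
    Monotone fun n : ℕ => sqCap ((n : ℝ) + 1) x := by
  intro m n hmn
  have hc : ((m : ℝ) + 1) ≤ (n : ℝ) + 1 := by
    have := (Nat.cast_le (α := ℝ)).mpr hmn; linarith
  have h1 : 0 ≤ min ‖x‖ ((m:ℝ)+1) := le_min (norm_nonneg _) (by positivity)
  exact pow_le_pow_left₀ h1 (le_min (min_le_left _ _) (le_trans (min_le_right _ _) hc)) 2

/-! ### Discretization of measures with bounded second moment -/

lemma discretize {d : ℕ} (δ lam : ℝ) (hδ : 0 < δ) (hlam : 0 ≤ lam) :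
    ∃ V : Finset (EuclideanSpace ℝ (Fin d)),
      ∀ (ν : Measure (EuclideanSpace ℝ (Fin d))), IsProbabilityMeasure ν →
        Integrable (fun x => ‖x‖ ^ 2) ν → (∫ x, ‖x‖ ^ 2 ∂ν) ≤ lam →
        ∃ w : {w : (↥V) → ℝ≥0 // ∑ i, w i = 1}, dBL ν (diracComb V w).toMeasure < δ := by
  classical
  set M : ℝ := Real.sqrt (8 * (lam + 1) / δ) with hM
  have hM2 : M ^ 2 = 8 * (lam + 1) / δ := Real.sq_sqrt (by positivity)
  have hMpos : 0 < M := Real.sqrt_pos.mpr (by positivity)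
  set ε₁ : ℝ := δ / 4 with hε₁
  have hε₁pos : 0 < ε₁ := by positivity
  obtain ⟨t, hts, htfin, htcov⟩ := Metric.finite_approx_of_totallyBounded
    (isCompact_closedBall (0 : EuclideanSpace ℝ (Fin d)) M).totallyBounded ε₁ hε₁pos
  set l : List (EuclideanSpace ℝ (Fin d)) := htfin.toFinset.toList with hl
  set s : EuclideanSpace ℝ (Fin d) → EuclideanSpace ℝ (Fin d) := pickFn ε₁ 0 l with hs
  set V : Finset (EuclideanSpace ℝ (Fin d)) := insert 0 htfin.toFinset with hV
  have hrange : ∀ x, s x ∈ V := by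
    intro x
    have h := pickFn_mem ε₁ 0 l x
    rcases List.mem_cons.mp h with h | h
    · rw [hs, h]; exact Finset.mem_insert_self _ _
    · exact Finset.mem_insert_of_mem (Set.Finite.mem_toFinset htfin |>.mpr
        ((Set.Finite.mem_toFinset htfin).mp (Finset.mem_toList.mp h)))
  have hsmeas : Measurable s := pickFn_measurable ε₁ 0 l
  have hsball : ∀ x : EuclideanSpace ℝ (Fin d), ‖x‖ ≤ M → dist x (s x) < ε₁ := by
    intro x hx
    apply pickFn_dist
    have hxb : x ∈ Metric.closedBall (0 : EuclideanSpace ℝ (Fin d)) M := by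
      rwa [Metric.mem_closedBall, dist_zero_right]
    obtain ⟨g, hg, hxg⟩ := Set.mem_iUnion₂.mp (htcov hxb)
    exact ⟨g, Finset.mem_toList.mpr ((Set.Finite.mem_toFinset htfin).mpr hg),
      Metric.mem_ball.mp hxg⟩
  refine ⟨V, fun ν hprob hint hmom => ?_⟩
  have hpre : ∀ i : ↥V, MeasurableSet (s ⁻¹' {(i : EuclideanSpace ℝ (Fin d))}) :=
    fun i => hsmeas (measurableSet_singleton _)
  have hdisj : Set.PairwiseDisjoint (Finset.univ : Finset ↥V)
      (fun i : ↥V => s ⁻¹' {(i : EuclideanSpace ℝ (Fin d))}) := by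
    intro i _ j _ hij
    refine Set.disjoint_left.mpr fun x hxi hxj => hij ?_
    have h1 : s x = (i : EuclideanSpace ℝ (Fin d)) := hxi
    have h2 : s x = (j : EuclideanSpace ℝ (Fin d)) := hxj
    exact Subtype.ext (h1 ▸ h2)
  have huniv : (⋃ i ∈ (Finset.univ : Finset ↥V), s ⁻¹' {(i : EuclideanSpace ℝ (Fin d))})
      = Set.univ := by
    refine Set.eq_univ_of_forall fun x => ?_
    exact Set.mem_biUnion (Finset.mem_univ (⟨s x, hrange x⟩ : ↥V)) rfl
  have hsum1 : ∑ i : ↥V, ν (s ⁻¹' {(i : EuclideanSpace ℝ (Fin d))}) = 1 := by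
    rw [← measure_biUnion_finset hdisj (fun i _ => hpre i), huniv, measure_univ]
  set w : ↥V → ℝ≥0 := fun i => (ν (s ⁻¹' {(i : EuclideanSpace ℝ (Fin d))})).toNNReal with hw
  have hwsum : ∑ i, w i = 1 := by
    have hcast : ((∑ i, w i : ℝ≥0) : ℝ≥0∞) = ((1 : ℝ≥0) : ℝ≥0∞) := by
      rw [ENNReal.coe_finset_sum, ENNReal.coe_one, ← hsum1]
      refine Finset.sum_congr rfl fun i _ => ?_
      exact ENNReal.coe_toNNReal (measure_ne_top ν _)
    exact_mod_cast hcast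
  refine ⟨⟨w, hwsum⟩, ?_⟩
  have hkey : ∀ f : EuclideanSpace ℝ (Fin d) → ℝ, Continuous f → (∀ x, |f x| ≤ 1) →
      ∫ x, f x ∂(diracComb V ⟨w, hwsum⟩).toMeasure = ∫ x, f (s x) ∂ν := by
    intro f hfc hfb
    rw [integral_diracComb V ⟨w, hwsum⟩ f]
    have hint2 : Integrable (fun x => f (s x)) ν := by
      refine (integrable_const (1:ℝ)).mono' ((hfc.measurable.comp hsmeas).aestronglyMeasurable) ?_
      exact Filter.Eventually.of_forall fun x => by
        rw [Real.norm_eq_abs]; exact hfb _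
    have hresι : ∫ x, f (s x) ∂ν = ∫ x in ⋃ i ∈ (Finset.univ : Finset ↥V),
        s ⁻¹' {(i : EuclideanSpace ℝ (Fin d))}, f (s x) ∂ν := by
      rw [huniv, setIntegral_univ]
    rw [hresι, integral_biUnion_finset _ (fun i _ => hpre i) hdisj
      (fun i _ => hint2.integrableOn)]
    refine Finset.sum_congr rfl fun i _ => ?_
    have hcongr : ∀ x ∈ s ⁻¹' {(i : EuclideanSpace ℝ (Fin d))},
        f (s x) = f (i : EuclideanSpace ℝ (Fin d)) := fun x hx => by rw [hx]
    rw [setIntegral_congr_fun (hpre i) hcongr, setIntegral_const]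
    simp only [smul_eq_mul, hw]
    rfl
  have hboundc : dBL ν (diracComb V ⟨w, hwsum⟩).toMeasure ≤ ε₁ + 2 * lam / M ^ 2 := by
    refine dBL_le (by positivity) fun f hfb hfl => ?_
    rw [hkey f hfl.continuous hfb]
    have hintf : Integrable f ν := by
      refine (integrable_const (1:ℝ)).mono' hfl.continuous.aestronglyMeasurable ?_
      exact Filter.Eventually.of_forall fun x => by rw [Real.norm_eq_abs]; exact hfb _
    have hintfs : Integrable (fun x => f (s x)) ν := by
      refine (integrable_const (1:ℝ)).mono' ((hfl.continuous.measurable.comp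
        hsmeas).aestronglyMeasurable) ?_
      exact Filter.Eventually.of_forall fun x => by rw [Real.norm_eq_abs]; exact hfb _
    have hptw : ∀ x : EuclideanSpace ℝ (Fin d),
        |f x - f (s x)| ≤ ε₁ + 2 * ‖x‖ ^ 2 / M ^ 2 := by
      intro x
      rcases le_or_gt ‖x‖ M with hx | hx
      · have hd := hsball x hx
        have hld := hfl.dist_le_mul x (s x)
        rw [Real.dist_eq] at hld
        have h2 : |f x - f (s x)| ≤ ε₁ := by
          calc |f x - f (s x)| ≤ 1 * dist x (s x) := hld
            _ ≤ ε₁ := by rw [one_mul]; exact hd.le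
        have h3 : 0 ≤ 2 * ‖x‖ ^ 2 / M ^ 2 := by positivity
        linarith
      · have h2 : |f x - f (s x)| ≤ 2 := by
          calc |f x - f (s x)| ≤ |f x| + |f (s x)| := abs_sub _ _
            _ ≤ 1 + 1 := add_le_add (hfb x) (hfb _)
            _ = 2 := by norm_num
        have h3 : (2:ℝ) ≤ 2 * ‖x‖ ^ 2 / M ^ 2 := by
          rw [le_div_iff₀ (by positivity)]
          nlinarith
        linarith
    have hrhsint : Integrable (fun x => ε₁ + 2 * ‖x‖ ^ 2 / M ^ 2) ν := by
      refine (integrable_const ε₁).add ?_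
      have hrw : (fun x : EuclideanSpace ℝ (Fin d) => 2 * ‖x‖ ^ 2 / M ^ 2)
          = fun x => (2 / M ^ 2) * ‖x‖ ^ 2 := by funext x; ring
      rw [hrw]
      exact hint.const_mul _
    calc |(∫ x, f x ∂ν) - ∫ x, f (s x) ∂ν| = |∫ x, (f x - f (s x)) ∂ν| := by
          rw [integral_sub hintf hintfs]
      _ ≤ ∫ x, |f x - f (s x)| ∂ν := by
          have hni := norm_integral_le_integral_norm (μ := ν) (fun x => f x - f (s x))
          simpa [Real.norm_eq_abs] using hni
      _ ≤ ∫ x, (ε₁ + 2 * ‖x‖ ^ 2 / M ^ 2) ∂ν :=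
          integral_mono (hintf.sub hintfs).abs hrhsint hptw
      _ = ε₁ + (2 / M ^ 2) * ∫ x, ‖x‖ ^ 2 ∂ν := by
          have hrw : (fun x : EuclideanSpace ℝ (Fin d) => ε₁ + 2 * ‖x‖ ^ 2 / M ^ 2)
              = fun x => ε₁ + (2 / M ^ 2) * ‖x‖ ^ 2 := by funext x; ring
          rw [hrw, integral_add (integrable_const ε₁) (hint.const_mul _),
            integral_const, integral_const_mul]
          simp [measure_univ]
      _ ≤ ε₁ + 2 * lam / M ^ 2 := by
          have h1 : (2 / M ^ 2) * ∫ x, ‖x‖ ^ 2 ∂ν ≤ (2 / M ^ 2) * lam :=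
            mul_le_mul_of_nonneg_left hmom (by positivity)
          have h2 : (2 / M ^ 2) * lam = 2 * lam / M ^ 2 := by ring
          linarith
  have hclt : ε₁ + 2 * lam / M ^ 2 < δ := by
    rw [hM2]
    have h1 : 2 * lam / (8 * (lam + 1) / δ) = 2 * lam * δ / (8 * (lam + 1)) := by
      rw [div_div_eq_mul_div]
    rw [h1]
    have h2 : 2 * lam * δ / (8 * (lam + 1)) ≤ δ / 4 := by
      rw [div_le_div_iff₀ (by positivity) (by norm_num)]
      nlinarith
    rw [hε₁]; linarith
  exact lt_of_le_of_lt hboundc hclt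

theorem stmt7 {d : ℕ} {Ω : Type*} [mΩ : MeasurableSpace Ω]
    (P : Measure Ω) [IsProbabilityMeasure P]
    (ℱ : Filtration ℝ mΩ) (T C : ℝ) (hT : 0 < T) (hC : 0 ≤ C)
    (μ : ℕ → ℝ → Ω → ProbabilityMeasure (EuclideanSpace ℝ (Fin d)))
    -- each `μ j t ω` has finite second moment
    (hmom : ∀ j ω, ∀ t ∈ Set.Icc 0 T,
      Integrable (fun x => ‖x‖ ^ 2) (μ j t ω).toMeasure)
    -- the measure-valued processes are adapted to the filtration `ℱ`
    (hadapted : ∀ (f : BoundedContinuousFunction (EuclideanSpace ℝ (Fin d)) ℝ) j,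
      ∀ t ∈ Set.Icc 0 T,
      StronglyMeasurable[ℱ t] (fun ω => ∫ x, f x ∂(μ j t ω).toMeasure))
    -- sample paths are continuous with respect to `dBL` on `[0, T]`
    (hcont : ∀ j ω, ∀ t ∈ Set.Icc 0 T, ∀ ε > 0, ∃ δ > 0, ∀ s ∈ Set.Icc (0:ℝ) T,
      |s - t| < δ → dBL ((μ j s ω).toMeasure) ((μ j t ω).toMeasure) < ε)
    -- `t ↦ e^{Ct}(∫ |x|² dμ_j(t) + 1)` is an `(ℱ t)`-submartingale on `[0, T]`
    (hsubmeas : ∀ j, ∀ t ∈ Set.Icc 0 T,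
      StronglyMeasurable[ℱ t]
        (fun ω => Real.exp (C * t) * ((∫ x, ‖x‖ ^ 2 ∂(μ j t ω).toMeasure) + 1)))
    (hsubint : ∀ j, ∀ t ∈ Set.Icc 0 T,
      Integrable (fun ω => Real.exp (C * t) * ((∫ x, ‖x‖ ^ 2 ∂(μ j t ω).toMeasure) + 1)) P)
    (hsub : ∀ j s t, 0 ≤ s → s ≤ t → t ≤ T →
      (fun ω => Real.exp (C * s) * ((∫ x, ‖x‖ ^ 2 ∂(μ j s ω).toMeasure) + 1)) ≤ᵐ[P]
        P[fun ω => Real.exp (C * t) * ((∫ x, ‖x‖ ^ 2 ∂(μ j t ω).toMeasure) + 1)|ℱ s])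
    -- uniformly bounded second moments at time `T`
    (B : ℝ)
    (hB : ∀ j, (∫ ω, (∫ x, ‖x‖ ^ 2 ∂(μ j T ω).toMeasure) ∂P) ≤ B) :
    ∀ δ > 0, ∃ K : Set (ProbabilityMeasure (EuclideanSpace ℝ (Fin d))),
      IsCompact K ∧ ∀ j, ENNReal.ofReal (1 - δ) ≤
        P {ω | ∀ t ∈ Set.Icc 0 T, ∃ η ∈ K,
          dBL ((μ j t ω).toMeasure) (η.toMeasure) < δ} := by
  classical
  intro δ hδ
  rcases lt_or_ge (1:ℝ) δ with hδ1 | hδ1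
  · refine ⟨∅, isCompact_empty, fun j => ?_⟩
    have h0 : ENNReal.ofReal (1 - δ) = 0 := ENNReal.ofReal_eq_zero.mpr (by linarith)
    rw [h0]
    exact zero_le
  have hTmem : T ∈ Set.Icc 0 T := ⟨hT.le, le_refl T⟩
  -- global constants
  set M₀ : ℝ := Real.exp (C * T) * (B + 1) with hM₀
  have hBnn : 0 ≤ B := by
    refine le_trans ?_ (hB 0)
    exact integral_nonneg fun ω => integral_nonneg fun x => by positivity
  have hM₀pos : 0 < M₀ := by positivity
  set lam : ℝ := M₀ / δ with hlam
  have hlampos : 0 < lam := by positivity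
  obtain ⟨V, hV⟩ := discretize (d := d) δ lam hδ hlampos.le
  haveI : CompactSpace {w : (↥V) → ℝ≥0 // ∑ i, w i = 1} := compactSpace_simplex V
  refine ⟨Set.range (diracComb V), isCompact_range (continuous_diracComb V), fun j => ?_⟩
  -- the submartingale and second moments
  set X : ℝ → Ω → ℝ :=
    fun t ω => Real.exp (C * t) * ((∫ x, ‖x‖ ^ 2 ∂(μ j t ω).toMeasure) + 1) with hX
  set m : ℝ → Ω → ℝ := fun t ω => ∫ x, ‖x‖ ^ 2 ∂(μ j t ω).toMeasure with hm
  have hmnn : ∀ t ω, 0 ≤ m t ω := fun t ω => integral_nonneg fun x => by positivity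
  have hXnn : ∀ t ω, 0 ≤ X t ω :=
    fun t ω => mul_nonneg (Real.exp_pos _).le (by linarith [hmnn t ω])
  -- countable dense set of times
  set u : ℕ → ℝ := fun n => min T (max 0 ((Denumerable.ofNat ℚ n : ℚ) : ℝ)) with hu
  have hu_mem : ∀ n, u n ∈ Set.Icc 0 T :=
    fun n => ⟨le_min hT.le (le_max_left _ _), min_le_left _ _⟩
  have hu_dense : ∀ t ∈ Set.Icc (0:ℝ) T, ∀ ε > 0, ∃ n, |u n - t| < ε := by
    intro t ht ε hε
    obtain ⟨q, hq1, hq2⟩ := exists_rat_btwn (by linarith : t - ε < t)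
    obtain ⟨nq, hofnat⟩ : ∃ n, (Denumerable.ofNat ℚ n : ℚ) = q :=
      ⟨@Encodable.encode ℚ Denumerable.toEncodable q, Denumerable.ofNat_encode q⟩
    refine ⟨nq, ?_⟩
    have habs : |((q:ℚ):ℝ) - t| < ε := by
      rw [abs_sub_lt_iff]; constructor <;> linarith
    calc |u nq - t|
        ≤ |((q:ℚ):ℝ) - t| := by rw [hu]; simp only [hofnat]; exact clamp_abs T _ t ht.1 ht.2
      _ < ε := habs
  -- measurability of X at fixed times
  have hXmeas : ∀ t ∈ Set.Icc (0:ℝ) T, Measurable (X t) :=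
    fun t ht => ((hsubmeas j t ht).measurable).le (ℱ.le t)
  -- the exceptional sets
  set An : ℕ → Set Ω := fun n => {ω | ∃ k ≤ n, lam ≤ X (u k) ω} with hAn
  set A : Set Ω := ⋃ n, An n with hA
  have hAnmeas : ∀ n, MeasurableSet (An n) := by
    intro n
    have : An n = ⋃ k ∈ Finset.range (n+1), {ω | lam ≤ X (u k) ω} := by
      ext ω
      simp only [hAn, Set.mem_setOf_eq, Set.mem_iUnion, Finset.mem_range]
      constructor
      · rintro ⟨k, hk, hX⟩; exact ⟨k, by omega, hX⟩
      · rintro ⟨k, hk, hX⟩; exact ⟨k, by omega, hX⟩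
    rw [this]
    exact MeasurableSet.biUnion (Finset.range (n+1)).countable_toSet
      fun k _ => measurableSet_le measurable_const (hXmeas _ (hu_mem k))
  have hAmeas : MeasurableSet A := MeasurableSet.iUnion hAnmeas
  -- expectation bound at time T
  have hintmT : Integrable (m T) P := by
    have h1 : (fun ω => m T ω + 1)
        = fun ω => (Real.exp (C * T))⁻¹ * (Real.exp (C * T) * (m T ω + 1)) := by
      funext ω; field_simp
    have h2 : Integrable (fun ω => m T ω + 1) P := by
      rw [h1]; exact (hsubint j T hTmem).const_mul _
    refine (h2.sub (integrable_const (1:ℝ))).congr ?_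
    exact Filter.Eventually.of_forall fun ω => by simp
  have hEXT : ∫ ω, X T ω ∂P ≤ M₀ := by
    have h1 : ∫ ω, X T ω ∂P = Real.exp (C * T) * ((∫ ω, m T ω ∂P) + 1) := by
      rw [hX]
      simp only
      rw [integral_const_mul, integral_add hintmT (integrable_const (1:ℝ)), integral_const]
      simp [measure_univ]
    rw [h1, hM₀]
    have := hB j
    have hle : (∫ ω, m T ω ∂P) + 1 ≤ B + 1 := by
      have : ∫ ω, m T ω ∂P ≤ B := hB j
      linarith
    exact mul_le_mul_of_nonneg_left hle (Real.exp_pos _).le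
  -- Doob's maximal inequality over finite subsets of times
  set ε' : ℝ≥0 := ⟨lam, hlampos.le⟩ with hε'
  have hPAn : ∀ n, P (An n) ≤ ENNReal.ofReal M₀ / ENNReal.ofReal lam := by
    intro n
    set F : Finset ℝ := insert T ((Finset.range (n+1)).image u) with hF
    have hF_sub : ∀ r ∈ F, r ∈ Set.Icc (0:ℝ) T := by
      intro r hr
      rcases Finset.mem_insert.mp hr with rfl | hr
      · exact hTmem
      · obtain ⟨k, _, rfl⟩ := Finset.mem_image.mp hr
        exact hu_mem k
    set N : ℕ := F.card with hN
    have hNrfl : F.card = N := rfl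
    set e := F.orderEmbOfFin hNrfl with he
    set τ : ℕ → ℝ := fun i => if h : i < N then e ⟨i, h⟩ else T with hτ
    have hτeq : ∀ (i : ℕ) (h : i < N), τ i = e ⟨i, h⟩ := fun i h => dif_pos h
    have hτeq' : ∀ i : ℕ, ¬ i < N → τ i = T := fun i h => dif_neg h
    have hτ_memF : ∀ i, τ i ∈ Set.Icc (0:ℝ) T := by
      intro i
      by_cases hi : i < N
      · rw [hτeq i hi]; exact hF_sub _ (Finset.orderEmbOfFin_mem F hNrfl _)
      · rw [hτeq' i hi]; exact hTmem
    have hτ_leT : ∀ i, τ i ≤ T := fun i => (hτ_memF i).2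
    have hτ_mono : Monotone τ := by
      intro i k hik
      by_cases hi : i < N <;> by_cases hk2 : k < N
      · rw [hτeq i hi, hτeq k hk2]
        exact e.monotone (by exact_mod_cast hik)
      · rw [hτeq' k hk2]; exact hτ_leT i
      · omega
      · rw [hτeq' i hi, hτeq' k hk2]
    have hτN : τ N = T := hτeq' N (lt_irrefl N)
    set 𝒢 : Filtration ℕ mΩ :=
      ⟨fun i => ℱ (τ i), fun i k hik => ℱ.mono (hτ_mono hik), fun i => ℱ.le _⟩ with h𝒢
    set g : ℕ → Ω → ℝ := fun i => X (τ i) with hg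
    have hsubm : Submartingale g 𝒢 P := by
      refine ⟨fun i => hsubmeas j (τ i) (hτ_memF i), fun i k hik => ?_, fun i =>
        hsubint j (τ i) (hτ_memF i)⟩
      exact hsub j (τ i) (τ k) (hτ_memF i).1 (hτ_mono hik) (hτ_memF k).2
    have hgnonneg : (0 : ℕ → Ω → ℝ) ≤ g := fun i ω => hXnn (τ i) ω
    have hmax := maximal_ineq hsubm hgnonneg (ε := ε') N
    set S : Set Ω := {ω | (ε' : ℝ) ≤ (Finset.range (N + 1)).sup'
      Finset.nonempty_range_add_one fun k => g k ω} with hS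
    have hintS : ENNReal.ofReal (∫ ω in S, g N ω ∂P) ≤ ENNReal.ofReal M₀ := by
      refine ENNReal.ofReal_le_ofReal ?_
      refine le_trans (setIntegral_le_integral (hsubm.integrable N)
        (Filter.Eventually.of_forall fun ω => hgnonneg N ω)) ?_
      have : g N = X T := by rw [hg]; simp only [hτN]
      rw [this]
      exact hEXT
    have hmax2 : (ε' : ℝ≥0∞) * P S ≤ ENNReal.ofReal M₀ := by
      have := le_trans hmax hintS
      exact this
    have hPS : P S ≤ ENNReal.ofReal M₀ / ENNReal.ofReal lam := by
      have hcoe : (ε' : ℝ≥0∞) = ENNReal.ofReal lam := by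
        rw [hε', ENNReal.ofReal, Real.toNNReal_of_nonneg hlampos.le]
        rfl
      rw [← hcoe]
      have hε'0 : (ε' : ℝ≥0∞) ≠ 0 := by
        simp only [ne_eq, ENNReal.coe_eq_zero]
        intro h
        apply hlampos.ne'
        have hcoe2 := congrArg NNReal.toReal h
        exact hcoe2
      rw [ENNReal.le_div_iff_mul_le (Or.inl hε'0) (Or.inl ENNReal.coe_ne_top)]
      rwa [mul_comm]
    refine le_trans (measure_mono ?_) hPS
    intro ω hω
    obtain ⟨k, hk, hXk⟩ := hω
    have huk_mem : u k ∈ F := Finset.mem_insert_of_mem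
      (Finset.mem_image.mpr ⟨k, Finset.mem_range.mpr (by omega), rfl⟩)
    have : u k ∈ Set.range e := by rw [Finset.range_orderEmbOfFin]; exact_mod_cast huk_mem
    obtain ⟨i₀, hi₀⟩ := this
    have hτi₀ : τ (i₀ : ℕ) = u k := by
      rw [hτeq _ i₀.isLt, Fin.eta]
      exact hi₀
    have hg_eq : g (i₀ : ℕ) ω = X (u k) ω := by rw [hg]; simp only [hτi₀]
    have hi₀mem : (i₀ : ℕ) ∈ Finset.range (N + 1) := Finset.mem_range.mpr (by omega)
    have hsup : g (i₀ : ℕ) ω ≤ (Finset.range (N + 1)).sup'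
        Finset.nonempty_range_add_one fun k' => g k' ω :=
      Finset.le_sup' (f := fun k' => g k' ω) hi₀mem
    show (ε' : ℝ) ≤ _
    calc (ε' : ℝ) = lam := rfl
      _ ≤ X (u k) ω := hXk
      _ = g (i₀ : ℕ) ω := hg_eq.symm
      _ ≤ _ := hsup
  -- probability of the bad set
  have hPA : P A ≤ ENNReal.ofReal δ := by
    have hmono : Monotone An := by
      intro a b hab ω hω
      obtain ⟨k, hk, h⟩ := hω
      exact ⟨k, le_trans hk hab, h⟩
    rw [hA, hmono.directed_le.measure_iUnion]
    refine iSup_le fun n => le_trans (hPAn n) ?_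
    rw [← ENNReal.ofReal_div_of_pos hlampos]
    refine ENNReal.ofReal_le_ofReal ?_
    have hql : M₀ / lam = δ := by rw [hlam]; field_simp
    rw [hql]
  -- integrability of truncated second moments
  have hintcap : ∀ b : ℝ, 0 < b → ∀ ω' : Ω, ∀ r ∈ Set.Icc (0:ℝ) T,
      Integrable (fun x => sqCap b x) (μ j r ω').toMeasure := by
    intro b hbpos ω' r hr
    refine (hmom j ω' r hr).mono' ((sqCap_continuous b).aestronglyMeasurable) ?_
    refine Filter.Eventually.of_forall fun x => ?_
    rw [Real.norm_eq_abs, abs_of_nonneg (sqCap_nonneg b x)]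
    exact sqCap_le_sq hbpos.le x
  -- on the complement, all second moments are bounded by lam, uniformly in time
  have hsubset : Aᶜ ⊆ {ω | ∀ t ∈ Set.Icc 0 T, ∃ η ∈ Set.range (diracComb V),
      dBL ((μ j t ω).toMeasure) (η.toMeasure) < δ} := by
    intro ω hω
    have hXb : ∀ k, X (u k) ω < lam := by
      intro k
      by_contra hcon
      push_neg at hcon
      exact hω (Set.mem_iUnion.mpr ⟨k, ⟨k, le_refl k, hcon⟩⟩)
    have hmb : ∀ k, m (u k) ω ≤ lam := by
      intro k
      have h1 : 1 ≤ Real.exp (C * u k) := Real.one_le_exp (mul_nonneg hC (hu_mem k).1)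
      have h2 : Real.exp (C * u k) * (m (u k) ω + 1) < lam := hXb k
      nlinarith [hmnn (u k) ω]
    intro t ht
    have hmt : m t ω ≤ lam := by
      have hstep : ∀ n : ℕ, ∫ x, sqCap ((n:ℝ)+1) x ∂(μ j t ω).toMeasure ≤ lam := by
        intro n
        set b : ℝ := (n:ℝ) + 1 with hb
        have hb1 : 1 ≤ b := by
          rw [hb]
          have := Nat.cast_nonneg (α := ℝ) n
          linarith
        have hbpos : 0 < b := by linarith
        set c : ℝ := 2 * b ^ 2 with hc'
        have hcpos : 0 < c := by positivity
        set f : EuclideanSpace ℝ (Fin d) → ℝ := fun x => sqCap b x / c with hf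
        have hfb : ∀ x, |f x| ≤ 1 := by
          intro x
          rw [hf]
          simp only
          rw [abs_div, abs_of_pos hcpos, div_le_one hcpos, abs_of_nonneg (sqCap_nonneg b x)]
          calc sqCap b x ≤ b ^ 2 := sqCap_le hbpos.le x
            _ ≤ 2 * b ^ 2 := by nlinarith
        have hfl : LipschitzWith 1 f := by
          refine LipschitzWith.of_dist_le_mul fun x y => ?_
          rw [NNReal.coe_one, one_mul, Real.dist_eq, hf]
          simp only
          rw [div_sub_div_same, abs_div, abs_of_pos hcpos, div_le_iff₀ hcpos]
          calc |sqCap b x - sqCap b y| ≤ 2 * b * ‖x - y‖ := sqCap_abs_sub hbpos.le x y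
            _ ≤ dist x y * c := by
                rw [dist_eq_norm, hc']
                nlinarith [norm_nonneg (x - y), mul_nonneg (mul_nonneg (norm_nonneg (x - y))
                  (by linarith : (0:ℝ) ≤ b - 1)) hbpos.le]
        refine le_of_forall_pos_le_add fun ε hε => ?_
        obtain ⟨δ₀, hδ₀, hδ₀p⟩ := hcont j ω t ht (ε / c) (by positivity)
        obtain ⟨k, hk⟩ := hu_dense t ht δ₀ hδ₀
        have hdb := hδ₀p (u k) (hu_mem k) hk
        have hle := abs_sub_integral_le_dBL (μ := (μ j (u k) ω).toMeasure)
          (η := (μ j t ω).toMeasure) hfb hfl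
        have hcmp : |(∫ x, f x ∂(μ j (u k) ω).toMeasure) - ∫ x, f x ∂(μ j t ω).toMeasure|
            < ε / c := lt_of_le_of_lt hle hdb
        have hscale : ∀ ν : Measure (EuclideanSpace ℝ (Fin d)),
            ∫ x, f x ∂ν = (∫ x, sqCap b x ∂ν) / c := by
          intro ν
          rw [hf]
          exact integral_div c fun x => sqCap b x
        rw [hscale _, hscale _, div_sub_div_same, abs_div, abs_of_pos hcpos] at hcmp
        have h6 : |(∫ x, sqCap b x ∂(μ j (u k) ω).toMeasure)
            - ∫ x, sqCap b x ∂(μ j t ω).toMeasure| < ε := by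
          have := (div_lt_div_iff_of_pos_right hcpos).mp hcmp
          exact this
        have hcap_le : ∫ x, sqCap b x ∂(μ j (u k) ω).toMeasure ≤ lam := by
          refine le_trans (integral_mono (hintcap b hbpos ω (u k) (hu_mem k))
            (hmom j ω (u k) (hu_mem k)) (fun x => sqCap_le_sq hbpos.le x)) (hmb k)
        have h7 := (abs_sub_lt_iff.mp h6).2
        linarith
      have hconv : Filter.Tendsto (fun n : ℕ => ∫ x, sqCap ((n:ℝ)+1) x ∂(μ j t ω).toMeasure)
          Filter.atTop (nhds (m t ω)) := by
        refine integral_tendsto_of_tendsto_of_monotone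
          (fun n => hintcap _ (by positivity) ω t ht) (hmom j ω t ht) ?_ ?_
        · exact Filter.Eventually.of_forall fun x => sqCap_mono x
        · exact Filter.Eventually.of_forall fun x => sqCap_tendsto x
      exact le_of_tendsto hconv (Filter.Eventually.of_forall hstep)
    obtain ⟨w, hw⟩ := hV (μ j t ω).toMeasure inferInstance (hmom j ω t ht) hmt
    exact ⟨diracComb V w, Set.mem_range_self w, hw⟩
  calc ENNReal.ofReal (1 - δ) = 1 - ENNReal.ofReal δ := by
        rw [ENNReal.ofReal_sub 1 hδ.le, ENNReal.ofReal_one]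
    _ ≤ 1 - P A := tsub_le_tsub_left hPA 1
    _ = P Aᶜ := (prob_compl_eq_one_sub hAmeas).symm
    _ ≤ _ := measure_mono hsubset
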